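/- arXiv:1703.06631 — 2 statements merged into one kernel-verified Lean document; each statement's English description precedes it below -/
import Mathlib

section
/- Let A be an additive commutative group, p ≥ 2 an integer, V' ⊆ A a nonempty subset, P ∈ V', and A' the subgroup of A generated by V' − P. Suppose there are integers j > k > 0 such that p^j • V' ⊆ p^k • V', and suppose that A' is (p^j − p^k)-divisible, i.e. for every a ∈ A' there exists b ∈ A' with (p^j − p^k) • b = a. Then there exists α ∈ A such that (p^j − p^k) • α = 0 and V' ⊆ α + A' (every v ∈ V' can be written as α + a with a ∈ A'). In particular, there exist an integer m > 0 and α ∈ A with m • α = 0 and V' ⊆ α + A'. (This is the group-theoretic core of Lemma 1 of the paper: a subset of an abelian variety whose image under multiplication by p^j equals its image under multiplication by p^k is contained in a torsion translate of the subgroup it spans.) -/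
/-- Group-theoretic core of Lemma 1: if `p ≥ 2`, `V' ⊆ A` is nonempty, `P ∈ V'`,
`A'` is the subgroup generated by `V' - P`, `j > k > 0` are integers with
`p^j • V' ⊆ p^k • V'`, and `A'` is `(p^j - p^k)`-divisible, then there is an
`α ∈ A` with `(p^j - p^k) • α = 0` and `V' ⊆ α + A'`; in particular there are
an integer `m > 0` and `α ∈ A` with `m • α = 0` and `V' ⊆ α + A'`. -/
theorem subset_torsion_translate_of_pow_smul_subset
    {A : Type*} [AddCommGroup A] (p : ℤ) (hp : 2 ≤ p)
    (V' : Set A) (hne : V'.Nonempty) {P : A} (hP : P ∈ V')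
    (A' : AddSubgroup A)
    (hA' : A' = AddSubgroup.closure ((fun s => s - P) '' V'))
    (j k : ℕ) (hk : 0 < k) (hjk : k < j)
    (h : (fun v => p ^ j • v) '' V' ⊆ (fun v => p ^ k • v) '' V')
    (hdiv : ∀ a ∈ A', ∃ b ∈ A', (p ^ j - p ^ k) • b = a) :
    (∃ α : A, (p ^ j - p ^ k) • α = 0 ∧ ∀ v ∈ V', ∃ a ∈ A', v = α + a) ∧
    (∃ m : ℤ, 0 < m ∧ ∃ α : A, m • α = 0 ∧ ∀ v ∈ V', ∃ a ∈ A', v = α + a) := by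
  have hn : (0:ℤ) < p ^ j - p ^ k := by
    have : p ^ k < p ^ j := pow_lt_pow_right₀ (by linarith) hjk
    linarith
  have hmem : ∀ v ∈ V', v - P ∈ A' := by
    intro v hv
    rw [hA']
    exact AddSubgroup.subset_closure ⟨v, hv, rfl⟩
  obtain ⟨Q, hQ, hQeq⟩ := h ⟨P, hP, rfl⟩
  have hnP : (p ^ j - p ^ k) • P ∈ A' := by
    have : (p ^ j - p ^ k) • P = p ^ k • (Q - P) := by
      simp only at hQeq
      rw [smul_sub, sub_smul, ← hQeq]
    rw [this]
    exact A'.zsmul_mem (hmem Q hQ) _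
  obtain ⟨b, hb, hbeq⟩ := hdiv _ hnP
  have key : ∀ v ∈ V', ∃ a ∈ A', v = (P - b) + a := by
    intro v hv
    exact ⟨b + (v - P), A'.add_mem hb (hmem v hv), by abel⟩
  have hα : (p ^ j - p ^ k) • (P - b) = 0 := by
    rw [smul_sub, hbeq, sub_self]
  exact ⟨⟨P - b, hα, key⟩, ⟨p ^ j - p ^ k, hn, P - b, hα, key⟩⟩
end

section
/- Let A be a topological additive commutative group (addition and negation continuous), p ≥ 2 an integer, and let μ : A → A denote the map x ↦ p • x. Let V ⊆ A be a closed subset such that μ(V) ⊆ V. Assume: (i) μ is a closed map; (ii) V has only finitely many irreducible components and the topological Krull dimension of V is finite; (iii) for every irreducible component Z of V of maximal topological Krull dimension, the topological Krull dimension of μ(Z) equals that of Z. Let V' be an irreducible component of V of maximal topological Krull dimension, fix P ∈ V', and let A' be the topological closure of the subgroup of A generated by V' − P. Assume further that A' is n-divisible for every integer n > 0, i.e. for every n > 0 and every a ∈ A' there exists b ∈ A' with n • b = a. Then there exist an integer m > 0 and a point α ∈ A such that m • α = 0 and V' ⊆ α + A'. (This is a topological-group rendering of Lemma 1 of the paper,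 whose hypotheses (i)–(iii) and the divisibility of A' are the properties of multiplication by p and of abelian subvarieties of an abelian variety used in the paper's proof: multiplication by p on an abelian variety is a finite, hence closed and dimension-preserving, morphism, and abelian subvarieties are divisible groups.) -/
open Set TopologicalSpace

/-- The irreducible components of the subspace `V` of `A`, viewed as subsets of
the ambient space: the maximal subsets of `V` that are irreducible and closed
in the subspace topology of `V`. -/
def irreducibleComponentsIn {A : Type*} [TopologicalSpace A] (V : Set A) :
    Set (Set A) :=
  {Z | Z ⊆ V ∧ IsIrreducible Z ∧ IsClosed ((Subtype.val ⁻¹' Z : Set V)) ∧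
    ∀ Z' : Set A, Z' ⊆ V → IsIrreducible Z' →
      IsClosed ((Subtype.val ⁻¹' Z' : Set V)) → Z ⊆ Z' → Z' = Z}

section Aux

variable {X : Type*} [TopologicalSpace X]

/-- Preirreducibility transfers to the preimage in a subspace containing the set. -/
lemma aux_isPreirreducible_preimage {V Z : Set X} (hZV : Z ⊆ V)
    (h : IsPreirreducible Z) :
    IsPreirreducible (Subtype.val ⁻¹' Z : Set V) := by
  rintro u v hu hv ⟨x, hxZ, hxu⟩ ⟨y, hyZ, hyv⟩
  obtain ⟨U, hU, rfl⟩ := isOpen_induced_iff.mp hu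
  obtain ⟨W, hW, rfl⟩ := isOpen_induced_iff.mp hv
  obtain ⟨z, hzZ, hzU, hzW⟩ := h U W hU hW ⟨↑x, hxZ, hxu⟩ ⟨↑y, hyZ, hyv⟩
  exact ⟨⟨z, hZV hzZ⟩, hzZ, hzU, hzW⟩

lemma aux_isIrreducible_preimage {V Z : Set X} (hZV : Z ⊆ V)
    (h : IsIrreducible Z) :
    IsIrreducible (Subtype.val ⁻¹' Z : Set V) := by
  obtain ⟨⟨x, hx⟩, hpre⟩ := h
  exact ⟨⟨⟨x, hZV hx⟩, hx⟩, aux_isPreirreducible_preimage hZV hpre⟩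

/-- A set closed in a closed subspace is closed in the ambient space. -/
lemma aux_isClosed_of_closed_in_closed {V Z : Set X} (hV : IsClosed V) (hZV : Z ⊆ V)
    (h : IsClosed (Subtype.val ⁻¹' Z : Set V)) : IsClosed Z := by
  obtain ⟨C, hC, hCZ⟩ := isClosed_induced_iff.mp h
  have : Z = C ∩ V := by
    apply subset_antisymm
    · intro x hx
      refine ⟨?_, hZV hx⟩
      have hx' : (⟨x, hZV hx⟩ : V) ∈ Subtype.val ⁻¹' Z := hx
      rw [← hCZ] at hx'
      exact hx'
    · rintro x ⟨hxC, hxV⟩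
      have hx' : (⟨x, hxV⟩ : V) ∈ Subtype.val ⁻¹' C := hxC
      rw [hCZ] at hx'
      exact hx'
  rw [this]
  exact hC.inter hV

/-- Every irreducible subset of `V` is contained in some irreducible component of `V`. -/
lemma aux_exists_component {V Z : Set X} (hZV : Z ⊆ V) (hZ : IsIrreducible Z) :
    ∃ W ∈ irreducibleComponentsIn V, Z ⊆ W := by
  obtain ⟨t, ht, hst, hmax⟩ := exists_preirreducible (Subtype.val ⁻¹' Z : Set V)
    (aux_isPreirreducible_preimage hZV hZ.2)
  have htcl : IsClosed t := by
    have := hmax (closure t) ht.closure subset_closure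
    rw [← this]; exact isClosed_closure
  have htne : t.Nonempty := by
    obtain ⟨⟨x, hx⟩, hpre⟩ := aux_isIrreducible_preimage hZV hZ
    exact ⟨⟨x, hZV hx⟩, hst hx⟩
  have htirr : IsIrreducible t := ⟨htne, ht⟩
  refine ⟨Subtype.val '' t, ⟨?_, ?_, ?_, ?_⟩, ?_⟩
  · exact image_subset_iff.mpr fun x _ => x.2
  · exact htirr.image _ continuous_subtype_val.continuousOn
  · rwa [preimage_image_eq _ Subtype.val_injective]
  · intro Z' hZ'V hZ'irr hZ'cl hsub
    have hu : IsPreirreducible (Subtype.val ⁻¹' Z' : Set V) :=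
      aux_isPreirreducible_preimage hZ'V hZ'irr.2
    have htu : t ⊆ Subtype.val ⁻¹' Z' := fun x hx => hsub ⟨x, hx, rfl⟩
    have := hmax _ hu htu
    rw [← this] at *
    rw [Subtype.image_preimage_coe]
    exact (inter_eq_right.mpr hZ'V).symm
  · intro x hx
    exact ⟨⟨x, hZV hx⟩, hst hx, rfl⟩

/-- Members of `irreducibleComponentsIn V` of a closed `V` are closed in the ambient space. -/
lemma aux_component_closed {V : Set X} (hV : IsClosed V) {Z : Set X}
    (hZ : Z ∈ irreducibleComponentsIn V) : IsClosed Z :=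
  aux_isClosed_of_closed_in_closed hV hZ.1 hZ.2.2.1

/-- The inclusion of a closed subset into a larger subset is a closed embedding. -/
lemma aux_closedEmbedding_inclusion {Y Z : Set X} (h : Y ⊆ Z) (hY : IsClosed Y) :
    Topology.IsClosedEmbedding (Set.inclusion h) := by
  refine ⟨Topology.IsEmbedding.inclusion h, ?_⟩
  rw [Set.range_inclusion]
  exact hY.preimage continuous_subtype_val

lemma aux_dim_le {Y Z : Set X} (h : Y ⊆ Z) (hY : IsClosed Y) :
    topologicalKrullDim Y ≤ topologicalKrullDim Z :=
  (aux_closedEmbedding_inclusion h hY).isInducing.topologicalKrullDim_le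

end Aux

/-- If `f` is strictly monotone and `b` dominates the range, then the Krull dimension
jumps by at least one. -/
lemma aux_krullDim_succ_le {α β : Type*} [Preorder α] [Preorder β]
    (f : α → β) (hf : StrictMono f) (b : β) (hb : ∀ a, f a < b) (n : ℕ)
    (hn : (n : WithBot ℕ∞) ≤ Order.krullDim α) :
    ((n + 1 : ℕ) : WithBot ℕ∞) ≤ Order.krullDim β := by
  have hne : Nonempty α := by
    by_contra h
    rw [not_nonempty_iff] at h
    rw [Order.krullDim_eq_bot] at hn
    exact absurd hn (by simp [le_bot_iff])
  obtain ⟨q, hq⟩ : ∃ q : LTSeries α, n ≤ q.length := by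
    by_contra h
    push_neg at h
    have h1 : n ≠ 0 := by
      intro h0
      exact absurd (h0 ▸ h (RelSeries.singleton _ (Classical.arbitrary α))) (by simp)
    have h2 : Order.krullDim α ≤ ((n - 1 : ℕ) : WithBot ℕ∞) := by
      apply iSup_le
      intro q
      have : q.length ≤ n - 1 := by have := h q; omega
      exact_mod_cast this
    have := hn.trans h2
    have : n ≤ n - 1 := by exact_mod_cast this
    omega
  have hlast : (q.map f hf).last < b := by
    rw [LTSeries.last_map]; exact hb _
  have := Order.LTSeries.length_le_krullDim ((q.map f hf).snoc b hlast)
  refine le_trans ?_ this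
  have hlen : ((q.map f hf).snoc b hlast).length = q.length + 1 := by
    simp [RelSeries.snoc_length]
  rw [hlen]
  exact_mod_cast Nat.add_le_add_right hq 1

/-- A proper closed nonempty subset of an irreducible set of finite Krull dimension
has strictly smaller dimension; this is the rigidity statement we need. -/
lemma aux_eq_of_dim_eq {X : Type*} [TopologicalSpace X] {Y Z : Set X}
    (hYZ : Y ⊆ Z) (hYc : IsClosed Y) (hYne : Y.Nonempty) (hZirr : IsIrreducible Z)
    (htop : topologicalKrullDim Z ≠ ⊤)
    (hdim : topologicalKrullDim Y = topologicalKrullDim Z) : Y = Z := by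
  by_contra hne
  obtain ⟨z, hzZ, hzY⟩ : ∃ z, z ∈ Z ∧ z ∉ Y := by
    by_contra h
    push_neg at h
    exact hne (subset_antisymm hYZ h)
  have hemb : Topology.IsClosedEmbedding (Set.inclusion hYZ) :=
    aux_closedEmbedding_inclusion hYZ hYc
  set f := IrreducibleCloseds.map _ hemb.continuous with hfdef
  have hf : StrictMono f := IrreducibleCloseds.map_strictMono_of_isInducing hemb.isInducing
  have hunivZ : IsIrreducible (univ : Set Z) := by
    have h1 : IsPreirreducible (Subtype.val ⁻¹' Z : Set Z) :=
      aux_isPreirreducible_preimage (le_refl Z) hZirr.2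
    have h2 : (Subtype.val ⁻¹' Z : Set Z) = univ := by
      ext x; simpa using x.2
    rw [h2] at h1
    have : Nonempty Z := Nonempty.to_subtype hZirr.nonempty
    exact ⟨univ_nonempty, h1⟩
  set b : IrreducibleCloseds Z := ⟨univ, hunivZ, isClosed_univ⟩ with hbdef
  have hb : ∀ a, f a < b := by
    intro a
    have hsub : (f a : Set Z) ⊆ Subtype.val ⁻¹' Y := by
      rw [hfdef, IrreducibleCloseds.coe_map]
      refine closure_minimal ?_ (hYc.preimage continuous_subtype_val)
      rintro _ ⟨y, -, rfl⟩
      exact y.2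
    refine lt_of_le_of_ne (SetLike.coe_subset_coe.mp (subset_univ _)) ?_
    intro h
    have : (⟨z, hzZ⟩ : Z) ∈ (f a : Set Z) := by
      rw [h]; trivial
    exact hzY (hsub this)
  -- extract a natural number for the dimension
  have h0 : (0 : WithBot ℕ∞) ≤ topologicalKrullDim Y := by
    have : Nonempty (IrreducibleCloseds Y) := by
      obtain ⟨y, hy⟩ := hYne
      exact ⟨⟨closure {⟨y, hy⟩}, isIrreducible_singleton.closure, isClosed_closure⟩⟩
    exact Order.krullDim_nonneg
  obtain ⟨n, hn⟩ : ∃ n : ℕ, topologicalKrullDim Z = (n : WithBot ℕ∞) := by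
    rw [← hdim] at htop ⊢
    cases hd : topologicalKrullDim Y with
    | bot => rw [hd] at h0; exact absurd h0 (by simp)
    | coe e =>
      cases e with
      | top => exact absurd (by rw [hd]; rfl) htop
      | coe m => exact ⟨m, rfl⟩
  have hY_n : (n : WithBot ℕ∞) ≤ topologicalKrullDim Y := by
    rw [hdim, hn]
  have := aux_krullDim_succ_le f hf b hb n hY_n
  rw [show Order.krullDim (IrreducibleCloseds Z) = topologicalKrullDim Z from rfl, hn] at this
  have : n + 1 ≤ n := by exact_mod_cast this
  omega

/-- Topological-group rendering of Lemma 1 of the paper. -/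
theorem component_subset_torsion_translate
    {A : Type*} [AddCommGroup A] [TopologicalSpace A] [IsTopologicalAddGroup A]
    (p : ℤ) (hp : 2 ≤ p)
    (V : Set A) (hVclosed : IsClosed V)
    (hμV : (fun x : A => p • x) '' V ⊆ V)
    (hμclosed : IsClosedMap (fun x : A => p • x))
    (hfin : (irreducibleComponentsIn V).Finite)
    (hdimV : topologicalKrullDim V ≠ ⊤)
    (hμdim : ∀ Z ∈ irreducibleComponentsIn V,
      (∀ Z' ∈ irreducibleComponentsIn V,
        topologicalKrullDim Z' ≤ topologicalKrullDim Z) →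
      topologicalKrullDim ((fun x : A => p • x) '' Z) = topologicalKrullDim Z)
    (V' : Set A) (hV' : V' ∈ irreducibleComponentsIn V)
    (hV'max : ∀ Z ∈ irreducibleComponentsIn V,
      topologicalKrullDim Z ≤ topologicalKrullDim V')
    (P : A) (hP : P ∈ V')
    (A' : Set A)
    (hA' : A' = closure ((AddSubgroup.closure ((fun s => s - P) '' V') : Set A)))
    (hdiv : ∀ n : ℤ, 0 < n → ∀ a ∈ A', ∃ b ∈ A', n • b = a) :
    ∃ m : ℤ, 0 < m ∧ ∃ α : A, m • α = 0 ∧ ∀ v ∈ V', ∃ a ∈ A', v = α + a := by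
  classical
  set μ : A → A := fun x : A => p • x with hμdef
  have hμcont : Continuous μ := continuous_zsmul p
  -- dimension of V' is not ⊤
  have hdimV' : topologicalKrullDim V' ≠ ⊤ := by
    intro h
    exact hdimV (top_le_iff.mp (h ▸ aux_dim_le hV'.1 (aux_component_closed hVclosed hV')))
  -- One step: multiplication by p maps a maximal-dimension component onto
  -- a maximal-dimension component.
  have step : ∀ W ∈ irreducibleComponentsIn V,
      topologicalKrullDim W = topologicalKrullDim V' →
      μ '' W ∈ irreducibleComponentsIn V ∧
        topologicalKrullDim (μ '' W) = topologicalKrullDim V' := by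
    intro W hW hWdim
    have hWclosed : IsClosed W := aux_component_closed hVclosed hW
    have hWirr : IsIrreducible W := hW.2.1
    have himμ : μ '' W ⊆ V := (image_mono (f := μ) hW.1).trans hμV
    have himcl : IsClosed (μ '' W) := hμclosed W hWclosed
    have himirr : IsIrreducible (μ '' W) := hWirr.image μ hμcont.continuousOn
    have hWmax : ∀ Z' ∈ irreducibleComponentsIn V,
        topologicalKrullDim Z' ≤ topologicalKrullDim W := by
      intro Z' hZ'
      rw [hWdim]
      exact hV'max Z' hZ'
    have himdim : topologicalKrullDim (μ '' W) = topologicalKrullDim W :=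
      hμdim W hW hWmax
    obtain ⟨Z, hZ, hμWZ⟩ := aux_exists_component himμ himirr
    have hZdim : topologicalKrullDim Z = topologicalKrullDim V' := by
      apply le_antisymm (hV'max Z hZ)
      calc topologicalKrullDim V' = topologicalKrullDim (μ '' W) := by
            rw [himdim, hWdim]
        _ ≤ topologicalKrullDim Z := aux_dim_le hμWZ himcl
    have hZtop : topologicalKrullDim Z ≠ ⊤ := by rw [hZdim]; exact hdimV'
    have heq : μ '' W = Z := by
      apply aux_eq_of_dim_eq hμWZ himcl (hWirr.nonempty.image μ) hZ.2.1 hZtop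
      rw [himdim, hWdim, hZdim]
    rw [heq]
    exact ⟨hZ, hZdim⟩
  -- the iterated images
  set Wseq : ℕ → Set A := fun n => (fun x : A => p ^ n • x) '' V' with hWseqdef
  have hWseq0 : Wseq 0 = V' := by
    simp [hWseqdef]
  have hWseqsucc : ∀ n, Wseq (n + 1) = μ '' Wseq n := by
    intro n
    simp only [hWseqdef, hμdef, image_image]
    apply image_congr
    intro x _
    rw [← mul_zsmul, ← pow_succ']
  have hWseqmem : ∀ n, Wseq n ∈ irreducibleComponentsIn V ∧
      topologicalKrullDim (Wseq n) = topologicalKrullDim V' := by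
    intro n
    induction n with
    | zero => rw [hWseq0]; exact ⟨hV', rfl⟩
    | succ n ih =>
      rw [hWseqsucc n]
      exact step (Wseq n) ih.1 ih.2
  -- pigeonhole
  have : ∃ k l : ℕ, k < l ∧ Wseq k = Wseq l := by
    have hfin' : Finite (irreducibleComponentsIn V) := hfin
    set g : ℕ → irreducibleComponentsIn V := fun n => ⟨Wseq n, (hWseqmem n).1⟩ with hgdef
    obtain ⟨a, b, hab, hg⟩ := Finite.exists_ne_map_eq_of_infinite g
    have hW : Wseq a = Wseq b := congrArg Subtype.val hg
    rcases lt_or_gt_of_ne hab with h | h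
    · exact ⟨a, b, h, hW⟩
    · exact ⟨b, a, h, hW.symm⟩
  obtain ⟨k, l, hkl, hW⟩ := this
  -- the subgroup
  set G : AddSubgroup A := AddSubgroup.closure ((fun s => s - P) '' V') with hGdef
  have hA'G : A' = (G.topologicalClosure : Set A) := by
    rw [hA', AddSubgroup.topologicalClosure_coe]
  -- find y with p^l • y = p^k • P
  have hPk : p ^ k • P ∈ Wseq l := by
    rw [← hW]
    exact mem_image_of_mem _ hP
  obtain ⟨y, hyV', hy⟩ := hPk
  -- the torsion multiple
  have hp1 : (1 : ℤ) < p := by linarith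
  have hm : 0 < p ^ l - p ^ k := sub_pos.mpr (pow_lt_pow_right₀ hp1 hkl)
  refine ⟨p ^ l - p ^ k, hm, ?_⟩
  have hmP : (p ^ l - p ^ k) • P ∈ G := by
    have h1 : (p ^ l - p ^ k) • P = p ^ l • (P - y) := by
      rw [sub_zsmul, zsmul_sub, ← hy]
      abel
    rw [h1]
    apply zsmul_mem
    have : y - P ∈ G := AddSubgroup.subset_closure ⟨y, hyV', rfl⟩
    have := AddSubgroup.neg_mem G this
    simpa using this
  have hmPA' : (p ^ l - p ^ k) • P ∈ A' := by
    rw [hA']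
    exact subset_closure hmP
  obtain ⟨b, hbA', hb⟩ := hdiv _ hm _ hmPA'
  refine ⟨P - b, ?_, ?_⟩
  · rw [zsmul_sub, hb, sub_self]
  · intro v hv
    refine ⟨b + (v - P), ?_, by abel⟩
    rw [hA'G]
    have hb' : b ∈ G.topologicalClosure := by rw [← SetLike.mem_coe, ← hA'G]; exact hbA'
    have hv' : v - P ∈ G.topologicalClosure :=
      G.le_topologicalClosure (AddSubgroup.subset_closure ⟨v, hv, rfl⟩)
    exact AddSubgroup.add_mem _ hb' hv'
end
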